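/- Let ≺ be a local monomial order on ℕ^n (a total order compatible with addition such that α ⪯ 0 for all α ∈ ℕ^n). Then there exists a vector w ∈ ℝ^n with nonpositive components such that for all α, β ∈ ℕ^n, α ≺ β implies w·α ≤ w·β, and w is the first vector in a sequence of n vectors defining ≺ lexicographically (Robbiano-type representation). In particular, every local monomial order refines the partial order given by some w ∈ ℝ_{≤0}^n. -/

import Mathlib

noncomputable section

/-- Scalar product of a real weight vector with an integer exponent vector. -/
def udotN {n : ℕ} (u : Fin n → ℝ) (a : Fin n → ℕ) : ℝ := ∑ i, u i * (a i : ℝ)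

namespace RobbianoAux

open Finset

variable {n : ℕ}

/-- cast of an integer vector to a real vector -/
def cR {n : ℕ} (v : Fin n → ℤ) : Fin n → ℝ := fun i => (v i : ℝ)

/-- cast of an integer vector to a rational vector -/
def cQ {n : ℕ} (v : Fin n → ℤ) : Fin n → ℚ := fun i => (v i : ℚ)

/-- cast of a rational vector to a real vector -/
def qR {n : ℕ} (v : Fin n → ℚ) : Fin n → ℝ := fun i => (v i : ℝ)

/-- real dot product with an integer vector -/
def dotZ {n : ℕ} (u : Fin n → ℝ) (v : Fin n → ℤ) : ℝ := ∑ i, u i * (v i : ℝ)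

lemma qR_cQ (v : Fin n → ℤ) : qR (cQ v) = cR v := by
  funext i; simp [qR, cQ, cR]

lemma cQ_injective : Function.Injective (cQ (n := n)) := by
  intro a b h
  funext i
  have := congrFun h i
  simp only [cQ] at this
  exact_mod_cast this

lemma cQ_add (a b : Fin n → ℤ) : cQ (a + b) = cQ a + cQ b := by
  funext i; simp [cQ]

lemma cQ_zsmul (m : ℤ) (a : Fin n → ℤ) : cQ (m • a) = (m : ℚ) • cQ a := by
  funext i
  simp only [cQ, Pi.smul_apply, smul_eq_mul]
  push_cast
  ring

/-- `cQ` as a `ℤ`-linear map. -/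
def cQL : (Fin n → ℤ) →ₗ[ℤ] (Fin n → ℚ) where
  toFun := cQ
  map_add' := cQ_add
  map_smul' := by
    intro m a
    funext i
    simp only [cQ, Pi.smul_apply, RingHom.id_apply, zsmul_eq_mul]
    push_cast
    ring

lemma applyRepr (f : (Fin n → ℝ) →ₗ[ℝ] ℝ) (x : Fin n → ℝ) :
    f x = ∑ i, x i * f (Pi.single i 1) := by
  conv_lhs => rw [show x = ∑ i, x i • (Pi.single i (1:ℝ) : Fin n → ℝ) by
    funext j
    simp [Finset.sum_apply, Pi.single_apply, mul_comm]]
  rw [map_sum]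
  simp [smul_eq_mul]

lemma applyReprQ (f : (Fin n → ℚ) →ₗ[ℚ] ℚ) (x : Fin n → ℚ) :
    f x = ∑ i, x i * f (Pi.single i 1) := by
  conv_lhs => rw [show x = ∑ i, x i • (Pi.single i (1:ℚ) : Fin n → ℚ) by
    funext j
    simp [Finset.sum_apply, Pi.single_apply, mul_comm]]
  rw [map_sum]
  simp [smul_eq_mul]

/-- a functional given by a real coefficient vector, as a linear map -/
def dotL (u : Fin n → ℝ) : (Fin n → ℝ) →ₗ[ℝ] ℝ where
  toFun x := ∑ i, x i * u i
  map_add' a b := by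
    simp [add_mul, Finset.sum_add_distrib]
  map_smul' c a := by
    simp [Finset.mul_sum, mul_assoc]

/-- Lemma A: a rational vector in the real span of rational vectors lies in their
rational span. -/
lemma mem_spanQ_of_mem_spanR (T : Finset (Fin n → ℚ)) (v : Fin n → ℚ)
    (h : qR v ∈ Submodule.span ℝ (qR '' (T : Set (Fin n → ℚ)))) :
    v ∈ Submodule.span ℚ (T : Set (Fin n → ℚ)) := by
  by_contra hv
  obtain ⟨f, hfv, hfT⟩ := Submodule.exists_dual_map_eq_bot_of_notMem hv inferInstance
  -- real functional with coefficients the casts of those of `f`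
  set F : (Fin n → ℝ) →ₗ[ℝ] ℝ := dotL (fun i => (f (Pi.single i 1) : ℝ)) with hF
  have hFq : ∀ x : Fin n → ℚ, F (qR x) = (f x : ℝ) := by
    intro x
    rw [applyReprQ f x]
    push_cast
    simp [hF, dotL, qR]
  have hT0 : ∀ x ∈ (T : Set (Fin n → ℚ)), f x = 0 := by
    intro x hx
    have hmem : f x ∈ Submodule.map f (Submodule.span ℚ (T : Set (Fin n → ℚ))) :=
      Submodule.mem_map_of_mem (Submodule.subset_span hx)
    rw [hfT] at hmem
    simpa using hmem
  have hker : qR '' (T : Set (Fin n → ℚ)) ⊆ (LinearMap.ker F : Set (Fin n → ℝ)) := by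
    rintro y ⟨x, hx, rfl⟩
    simp [LinearMap.mem_ker, hFq, hT0 x hx]
  have : F (qR v) = 0 := by
    have hs : Submodule.span ℝ (qR '' (T : Set (Fin n → ℚ))) ≤ LinearMap.ker F :=
      Submodule.span_le.mpr hker
    simpa [LinearMap.mem_ker] using hs h
  rw [hFq] at this
  exact hfv (by exact_mod_cast this)

lemma clear_denoms {ι : Type*} (t : Finset ι) (q : ι → ℚ) :
    ∃ N : ℕ, 0 < N ∧ ∃ m : ι → ℤ, ∀ i ∈ t, (m i : ℚ) = N * q i ∧ (0 < q i → 0 < m i) := by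
  classical
  set N : ℕ := ∏ j ∈ t, (q j).den with hN
  refine ⟨N, Finset.prod_pos (fun j _ => (q j).pos), fun i => (q i).num * ((N / (q i).den : ℕ) : ℤ), ?_⟩
  intro i hi
  have hdvd : (q i).den ∣ N := Finset.dvd_prod_of_mem _ hi
  have hcancel : ((N / (q i).den) : ℕ) * (q i).den = N := Nat.div_mul_cancel hdvd
  constructor
  · have h1 : q i * ((q i).den : ℚ) = ((q i).num : ℚ) := Rat.mul_den_eq_num _
    have h2 : ((q i).den : ℚ) * ((N / (q i).den : ℕ) : ℚ) = (N : ℚ) := by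
      rw [← Nat.cast_mul, mul_comm ((q i).den), hcancel]
    rw [Int.cast_mul, Int.cast_natCast, ← h1, ← h2]
    ring
  · intro hq
    have h1 : 0 < (q i).num := Rat.num_pos.mpr hq
    have h2 : 0 < N / (q i).den := Nat.div_pos (Nat.le_of_dvd (Finset.prod_pos (fun j _ => (q j).pos)) hdvd) (q i).pos
    positivity

lemma linearIndependent_cQ {r : ℕ} {b : Fin r → (Fin n → ℤ)}
    (hb : LinearIndependent ℤ b) : LinearIndependent ℚ (fun i => cQ (b i)) := by
  rw [Fintype.linearIndependent_iff]
  intro g hg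
  obtain ⟨N, hN, m, hm⟩ := clear_denoms Finset.univ g
  have hsum : ∑ i, (m i : ℚ) • cQ (b i) = 0 := by
    have : ∑ i, (m i : ℚ) • cQ (b i) = (N : ℚ) • ∑ i, g i • cQ (b i) := by
      rw [Finset.smul_sum]
      refine Finset.sum_congr rfl fun i _ => ?_
      rw [(hm i (Finset.mem_univ i)).1, mul_smul]
    rw [this, hg, smul_zero]
  have hz : ∑ i, m i • b i = 0 := by
    apply cQ_injective
    have hc : cQ (∑ i, m i • b i) = ∑ i, (m i : ℚ) • cQ (b i) := by
      funext j
      simp only [cQ, Finset.sum_apply, Pi.smul_apply, smul_eq_mul]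
      push_cast
      rfl
    rw [hc, hsum]
    funext j
    simp [cQ]
  have hm0 := Fintype.linearIndependent_iff.mp hb _ hz
  intro i
  have := (hm i (Finset.mem_univ i)).1
  rw [hm0 i] at this
  have hNne : (N : ℚ) ≠ 0 := by positivity
  have h0 : (N : ℚ) * g i = 0 := by rw [← this]; simp
  rcases mul_eq_zero.mp h0 with h | h
  · exact absurd h hNne
  · exact h

lemma linearIndependent_cR {r : ℕ} {b : Fin r → (Fin n → ℤ)}
    (hb : LinearIndependent ℤ b) : LinearIndependent ℝ (fun i => cR (b i)) := by
  classical
  have hQ := linearIndependent_cQ hb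
  rw [Fintype.linearIndependent_iff]
  intro g hg
  by_contra hgne
  push_neg at hgne
  obtain ⟨i0, hi0⟩ := hgne
  have hsplit : g i0 • cR (b i0) + ∑ i ∈ Finset.univ.erase i0, g i • cR (b i) = 0 := by
    rw [add_comm, Finset.sum_erase_add _ _ (Finset.mem_univ i0)]
    exact hg
  have hrepr : cR (b i0) = ∑ i ∈ Finset.univ.erase i0, (-(g i) / g i0) • cR (b i) := by
    funext j
    have hs := congrFun hsplit j
    simp only [Pi.add_apply, Finset.sum_apply, Pi.smul_apply, smul_eq_mul, Pi.zero_apply] at hs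
    simp only [Finset.sum_apply, Pi.smul_apply, smul_eq_mul]
    have hmul : ∑ i ∈ Finset.univ.erase i0, (-(g i) / g i0) * cR (b i) j
        = (-(1:ℝ)/g i0) * ∑ i ∈ Finset.univ.erase i0, g i * cR (b i) j := by
      rw [Finset.mul_sum]
      refine Finset.sum_congr rfl fun i _ => ?_
      field_simp
    rw [hmul]
    have hesum : ∑ i ∈ Finset.univ.erase i0, g i * cR (b i) j = -(g i0 * cR (b i0) j) := by
      linarith
    rw [hesum]
    field_simp
  set T : Finset (Fin n → ℚ) := (Finset.univ.erase i0).image (fun i => cQ (b i)) with hT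
  have hmem : qR (cQ (b i0)) ∈ Submodule.span ℝ (qR '' (T : Set (Fin n → ℚ))) := by
    rw [qR_cQ, hrepr]
    refine Submodule.sum_mem _ fun i hi => Submodule.smul_mem _ _ (Submodule.subset_span ?_)
    refine ⟨cQ (b i), ?_, qR_cQ (b i)⟩
    simp only [hT, Finset.coe_image, Set.mem_image, Finset.mem_coe]
    exact ⟨i, by simpa using hi, rfl⟩
  have hQmem := mem_spanQ_of_mem_spanR T _ hmem
  rw [Submodule.mem_span_finset] at hQmem
  obtain ⟨f, -, hf⟩ := hQmem
  have hinj : Function.Injective fun i => cQ (b i) := hQ.injective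
  have hsum2 : ∑ i ∈ Finset.univ.erase i0, f (cQ (b i)) • cQ (b i) = cQ (b i0) := by
    rw [← hf, hT, Finset.sum_image]
    intro x _ y _ hxy
    exact hinj hxy
  have hrel : ∑ i, (if i = i0 then (-1 : ℚ) else f (cQ (b i))) • cQ (b i) = 0 := by
    rw [← Finset.sum_erase_add _ _ (Finset.mem_univ i0)]
    have he : ∑ i ∈ Finset.univ.erase i0, (if i = i0 then (-1 : ℚ) else f (cQ (b i))) • cQ (b i)
        = ∑ i ∈ Finset.univ.erase i0, f (cQ (b i)) • cQ (b i) := by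
      refine Finset.sum_congr rfl fun i hi => ?_
      rw [if_neg (Finset.ne_of_mem_erase hi)]
    rw [he, hsum2, if_pos rfl]
    simp
  have := Fintype.linearIndependent_iff.mp hQ _ hrel i0
  simp at this

lemma qR_sum {α : Type*} (t : Finset α) (g : α → ℚ) (v : α → (Fin n → ℚ)) :
    qR (∑ i ∈ t, g i • v i) = ∑ i ∈ t, (g i : ℝ) • qR (v i) := by
  funext j
  simp only [qR, Finset.sum_apply, Pi.smul_apply, smul_eq_mul]
  push_cast
  rfl

lemma cQ_sum {α : Type*} (t : Finset α) (m : α → ℤ) (v : α → (Fin n → ℤ)) :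
    cQ (∑ i ∈ t, m i • v i) = ∑ i ∈ t, (m i : ℚ) • cQ (v i) := by
  funext j
  simp only [cQ, Finset.sum_apply, Pi.smul_apply, smul_eq_mul]
  push_cast
  rfl

lemma ratRelation : ∀ (S : Finset (Fin n → ℤ)), ∀ lam : (Fin n → ℤ) → ℝ,
    (∀ p ∈ S, 0 < lam p) → ∑ p ∈ S, lam p • cR p = 0 → S.Nonempty →
    ∃ T ⊆ S, T.Nonempty ∧ ∃ k : (Fin n → ℤ) → ℕ,
      (∀ p ∈ T, 0 < k p) ∧ ∑ p ∈ T, (k p : ℤ) • p = 0 := by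
  classical
  intro S
  induction S using Finset.strongInduction with
  | _ S IH =>
  intro lam hpos hsum hne
  by_cases hker : ∀ mu : (Fin n → ℤ) → ℝ, (∑ p ∈ S, mu p • cR p = 0) →
      ∃ c : ℝ, ∀ p ∈ S, mu p = c * lam p
  · -- the only real relation is `lam` itself (up to scalar); extract a rational one
    obtain ⟨p0, hp0⟩ := hne
    have hlp0 : 0 < lam p0 := hpos p0 hp0
    have hsplit : lam p0 • cR p0 + ∑ p ∈ S.erase p0, lam p • cR p = 0 := by
      rw [add_comm, Finset.sum_erase_add _ _ hp0]
      exact hsum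
    have h1 : cR p0 = ∑ p ∈ S.erase p0, (-(lam p)/lam p0) • cR p := by
      funext j
      have hs := congrFun hsplit j
      simp only [Pi.add_apply, Finset.sum_apply, Pi.smul_apply, smul_eq_mul,
        Pi.zero_apply] at hs
      simp only [Finset.sum_apply, Pi.smul_apply, smul_eq_mul]
      have hmul : ∑ p ∈ S.erase p0, (-(lam p) / lam p0) * cR p j
          = (-(1:ℝ)/lam p0) * ∑ p ∈ S.erase p0, lam p * cR p j := by
        rw [Finset.mul_sum]
        refine Finset.sum_congr rfl fun p _ => ?_
        field_simp
      rw [hmul]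
      have hesum : ∑ p ∈ S.erase p0, lam p * cR p j = -(lam p0 * cR p0 j) := by linarith
      rw [hesum]
      field_simp
    set Tq : Finset (Fin n → ℚ) := (S.erase p0).image cQ with hTq
    have hmem : qR (cQ p0) ∈ Submodule.span ℝ (qR '' (Tq : Set (Fin n → ℚ))) := by
      rw [qR_cQ, h1]
      refine Submodule.sum_mem _ fun p hp => Submodule.smul_mem _ _ (Submodule.subset_span ?_)
      refine ⟨cQ p, ?_, qR_cQ p⟩
      simp only [hTq, Finset.coe_image, Set.mem_image, Finset.mem_coe]
      exact ⟨p, hp, rfl⟩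
    have hQ := mem_spanQ_of_mem_spanR Tq _ hmem
    rw [Submodule.mem_span_finset] at hQ
    obtain ⟨f, -, hf⟩ := hQ
    have hfsum : ∑ p ∈ S.erase p0, f (cQ p) • cQ p = cQ p0 := by
      rw [← hf, hTq, Finset.sum_image]
      intro x _ y _ hxy
      exact cQ_injective hxy
    set ν : (Fin n → ℤ) → ℝ := fun p => if p = p0 then 1 else -((f (cQ p) : ℝ)) with hν
    have hνrel : ∑ p ∈ S, ν p • cR p = 0 := by
      rw [← Finset.sum_erase_add _ _ hp0]
      have he : ∑ p ∈ S.erase p0, ν p • cR p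
          = -(∑ p ∈ S.erase p0, (f (cQ p) : ℝ) • cR p) := by
        rw [← Finset.sum_neg_distrib]
        refine Finset.sum_congr rfl fun p hp => ?_
        simp only [hν]
        rw [if_neg (Finset.ne_of_mem_erase hp), neg_smul]
      have hc : ∑ p ∈ S.erase p0, (f (cQ p) : ℝ) • cR p = cR p0 := by
        have := congrArg qR hfsum
        rw [qR_sum] at this
        rw [qR_cQ] at this
        rw [← this]
        refine Finset.sum_congr rfl fun p _ => ?_
        rw [qR_cQ]
      rw [he, hc]
      simp [hν]
    obtain ⟨c, hc⟩ := hker ν hνrel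
    have hcp0 : (1:ℝ) = c * lam p0 := by
      have := hc p0 hp0
      simp only [hν] at this
      simpa using this
    have hcpos : 0 < c := by nlinarith
    set ρ : (Fin n → ℤ) → ℚ := fun p => if p = p0 then 1 else -(f (cQ p)) with hρ
    have hρpos : ∀ p ∈ S, 0 < ρ p := by
      intro p hp
      by_cases hpp : p = p0
      · simp only [hρ, if_pos hpp]
        norm_num
      · simp only [hρ]
        rw [if_neg hpp]
        have := hc p hp
        simp only [hν] at this
        rw [if_neg hpp] at this
        have hlp : 0 < lam p := hpos p hp
        have : -((f (cQ p) : ℝ)) = c * lam p := this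
        have h2 : (0:ℝ) < -((f (cQ p) : ℝ)) := by nlinarith
        have : (0:ℝ) < ((-(f (cQ p)) : ℚ) : ℝ) := by push_cast; linarith
        exact_mod_cast this
    have hρrel : ∑ p ∈ S, ρ p • cQ p = 0 := by
      rw [← Finset.sum_erase_add _ _ hp0]
      have he : ∑ p ∈ S.erase p0, ρ p • cQ p = -(∑ p ∈ S.erase p0, f (cQ p) • cQ p) := by
        rw [← Finset.sum_neg_distrib]
        refine Finset.sum_congr rfl fun p hp => ?_
        simp only [hρ]
        rw [if_neg (Finset.ne_of_mem_erase hp), neg_smul]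
      rw [he, hfsum]
      simp [hρ]
    obtain ⟨N, hN, m, hm⟩ := clear_denoms S ρ
    refine ⟨S, subset_rfl, ⟨p0, hp0⟩, fun p => (m p).toNat, ?_, ?_⟩
    · intro p hp
      have := (hm p hp).2 (hρpos p hp)
      show 0 < (m p).toNat
      omega
    · have hmz : ∑ p ∈ S, m p • p = 0 := by
        apply cQ_injective
        rw [cQ_sum]
        have : ∑ p ∈ S, ((m p : ℚ)) • cQ p = ∑ p ∈ S, ((N : ℚ) * ρ p) • cQ p := by
          refine Finset.sum_congr rfl fun p hp => ?_
          rw [(hm p hp).1]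
        rw [this]
        have : ∑ p ∈ S, ((N : ℚ) * ρ p) • cQ p = (N : ℚ) • ∑ p ∈ S, ρ p • cQ p := by
          rw [Finset.smul_sum]
          refine Finset.sum_congr rfl fun p hp => ?_
          rw [mul_smul]
        rw [this, hρrel, smul_zero]
        funext j
        simp [cQ]
      rw [← hmz]
      refine Finset.sum_congr rfl fun p hp => ?_
      have hmp := (hm p hp).2 (hρpos p hp)
      show ((m p).toNat : ℤ) • p = m p • p
      rw [Int.toNat_of_nonneg (le_of_lt hmp)]
  · -- there is an essentially different relation: shrink the support
    push_neg at hker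
    obtain ⟨mu, hmurel, hmuprop⟩ := hker
    have key : ∀ mu : (Fin n → ℤ) → ℝ, (∑ p ∈ S, mu p • cR p = 0) →
        (∀ c : ℝ, ∃ p ∈ S, mu p ≠ c * lam p) → (∃ p ∈ S, 0 < mu p) →
        ∃ T ⊆ S, T.Nonempty ∧ ∃ k : (Fin n → ℤ) → ℕ,
          (∀ p ∈ T, 0 < k p) ∧ ∑ p ∈ T, (k p : ℤ) • p = 0 := by
      intro mu hmu0 hnotprop hexpos
      set Tpos := S.filter (fun p => 0 < mu p) with hTposdef
      have hTpos : Tpos.Nonempty := by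
        obtain ⟨p, hp, h⟩ := hexpos
        exact ⟨p, Finset.mem_filter.mpr ⟨hp, h⟩⟩
      set t := Tpos.inf' hTpos (fun p => lam p / mu p) with htdef
      obtain ⟨pstar, hpstar, hpstareq⟩ := Finset.exists_mem_eq_inf' hTpos (fun p => lam p / mu p)
      have hpstarS : pstar ∈ S := Finset.mem_of_mem_filter _ hpstar
      have hmustar : 0 < mu pstar := (Finset.mem_filter.mp hpstar).2
      have ht : 0 < t := by
        rw [htdef, hpstareq]
        exact div_pos (hpos pstar hpstarS) hmustar
      set lam' : (Fin n → ℤ) → ℝ := fun p => lam p - t * mu p with hlam'def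
      have hlam'0 : ∀ p ∈ S, 0 ≤ lam' p := by
        intro p hp
        simp only [hlam'def]
        by_cases hmp : 0 < mu p
        · have hle : t ≤ lam p / mu p :=
            Finset.inf'_le _ (Finset.mem_filter.mpr ⟨hp, hmp⟩)
          have := mul_le_mul_of_nonneg_right hle (le_of_lt hmp)
          rw [div_mul_cancel₀ _ (ne_of_gt hmp)] at this
          simpa using this
        · push_neg at hmp
          have h2 : t * mu p ≤ 0 := mul_nonpos_of_nonneg_of_nonpos (le_of_lt ht) hmp
          have h3 := hpos p hp
          linarith
      have hlam'star : lam' pstar = 0 := by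
        simp only [hlam'def]
        rw [htdef, hpstareq, div_mul_cancel₀ _ (ne_of_gt hmustar)]
        ring
      have hsum' : ∑ p ∈ S, lam' p • cR p = 0 := by
        have : ∀ p, lam' p • cR p = lam p • cR p - t • (mu p • cR p) := by
          intro p
          simp only [hlam'def]
          rw [sub_smul, mul_smul]
        simp only [this]
        rw [Finset.sum_sub_distrib, hsum, ← Finset.smul_sum, hmu0, smul_zero, sub_zero]
      have hne' : ∃ p ∈ S, lam' p ≠ 0 := by
        by_contra h
        push_neg at h
        obtain ⟨p, hp, hpe⟩ := hnotprop (1/t)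
        apply hpe
        have h0 := h p hp
        simp only [hlam'def] at h0
        have htne : t ≠ 0 := ne_of_gt ht
        field_simp
        linear_combination -h0
      set S' := S.filter (fun p => lam' p ≠ 0) with hS'def
      have hS'sub : S' ⊆ S := Finset.filter_subset _ _
      have hS'ss : S' ⊂ S := by
        refine (Finset.ssubset_iff_of_subset hS'sub).mpr ⟨pstar, hpstarS, ?_⟩
        intro hmem
        exact (Finset.mem_filter.mp hmem).2 hlam'star
      have hS'pos : ∀ p ∈ S', 0 < lam' p := by
        intro p hp
        obtain ⟨hpS, hpne⟩ := Finset.mem_filter.mp hp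
        exact lt_of_le_of_ne (hlam'0 p hpS) (Ne.symm hpne)
      have hS'sum : ∑ p ∈ S', lam' p • cR p = 0 := by
        rw [Finset.sum_filter_of_ne, hsum']
        intro p _ hne0
        intro h0
        apply hne0
        rw [h0, zero_smul]
      have hS'ne : S'.Nonempty := by
        obtain ⟨p, hp, hpe⟩ := hne'
        exact ⟨p, Finset.mem_filter.mpr ⟨hp, hpe⟩⟩
      obtain ⟨T, hTsub, hTne, k, hk1, hk2⟩ := IH S' hS'ss lam' hS'pos hS'sum hS'ne
      exact ⟨T, hTsub.trans hS'sub, hTne, k, hk1, hk2⟩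
    have hex0 : ∃ p ∈ S, mu p ≠ 0 := by
      obtain ⟨p, hp, hpe⟩ := hmuprop 0
      exact ⟨p, hp, by simpa using hpe⟩
    obtain ⟨p1, hp1, hp1ne⟩ := hex0
    rcases lt_or_gt_of_ne hp1ne with hneg | hposs
    · -- use -mu
      refine key (fun p => -(mu p)) ?_ ?_ ⟨p1, hp1, show 0 < -(mu p1) by linarith⟩
      · have h2 : ∑ p ∈ S, -(mu p) • cR p = -(∑ p ∈ S, mu p • cR p) := by
          rw [← Finset.sum_neg_distrib]
          refine Finset.sum_congr rfl fun p _ => ?_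
          rw [neg_smul]
        rw [h2, hmurel, neg_zero]
      · intro c
        obtain ⟨p, hp, hpe⟩ := hmuprop (-c)
        refine ⟨p, hp, fun h => hpe ?_⟩
        have h' : -(mu p) = c * lam p := h
        have : mu p = -c * lam p := by linarith
        rw [this]
    · exact key mu hmurel hmuprop ⟨p1, hp1, hposs⟩

lemma cR_add (a b : Fin n → ℤ) : cR (a + b) = cR a + cR b := by
  funext i; simp [cR]

lemma cR_injective : Function.Injective (cR (n := n)) := by
  intro a b h
  funext i
  have := congrFun h i
  simp only [cR] at this
  exact_mod_cast this

/-- a sum of elements of `P` with positive natural coefficients lies in `P` -/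
lemma sum_smul_mem {P : Set (Fin n → ℤ)}
    (hadd : ∀ v w, v ∈ P → w ∈ P → v + w ∈ P) :
    ∀ (T : Finset (Fin n → ℤ)), T.Nonempty → (∀ p ∈ T, p ∈ P) →
    ∀ k : (Fin n → ℤ) → ℕ, (∀ p ∈ T, 0 < k p) → (∑ p ∈ T, (k p : ℤ) • p) ∈ P := by

  classical
  have hnsmul : ∀ (m : ℕ) (p : Fin n → ℤ), 0 < m → p ∈ P → (m : ℤ) • p ∈ P := by
    intro m
    induction m with
    | zero => intro p h; omega
    | succ m ih =>
      intro p _ hp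
      rcases Nat.eq_zero_or_pos m with hm | hm
      · subst hm; simpa using hp
      · have h1 := ih p hm hp
        have : ((m + 1 : ℕ) : ℤ) • p = (m : ℤ) • p + p := by
          push_cast
          rw [add_smul, one_smul]
        rw [this]
        exact hadd _ _ h1 hp
  intro T
  induction T using Finset.induction_on with
  | empty => intro hne _ _ _; exact absurd hne (by simp)
  | @insert a s ha ih =>
    intro _ hTP k hk
    rw [Finset.sum_insert ha]
    rcases s.eq_empty_or_nonempty with rfl | hsne
    · simp only [Finset.sum_empty, add_zero]
      exact hnsmul _ _ (hk a (Finset.mem_insert_self a ∅)) (hTP a (Finset.mem_insert_self a ∅))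
    · refine hadd _ _
        (hnsmul _ _ (hk a (Finset.mem_insert_self a s)) (hTP a (Finset.mem_insert_self a s))) ?_
      exact ih hsne (fun q hq => hTP q (Finset.mem_insert_of_mem hq)) k
        (fun q hq => hk q (Finset.mem_insert_of_mem hq))

lemma zero_notin_hull {P : Set (Fin n → ℤ)}
    (hadd : ∀ v w, v ∈ P → w ∈ P → v + w ∈ P) (h0 : (0 : Fin n → ℤ) ∉ P) :
    (0 : Fin n → ℝ) ∉ convexHull ℝ (cR '' P) := by
  classical
  intro hmem
  rw [_root_.convexHull_eq] at hmem
  obtain ⟨ι, t, w, z, hw0, hw1, hzs, hcm⟩ := hmem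
  rw [Finset.centerMass_eq_of_sum_1 _ _ hw1] at hcm
  set t' := t.filter (fun i => 0 < w i) with ht'def
  have ht'sum : ∑ i ∈ t', w i • z i = 0 := by
    rw [← hcm]
    apply Finset.sum_filter_of_ne
    intro i hi hne0
    rcases lt_or_eq_of_le (hw0 i hi) with h | h
    · exact h
    · exact absurd (by rw [← h, zero_smul]) hne0
  have ht'ne : t'.Nonempty := by
    by_contra hemp
    rw [Finset.not_nonempty_iff_eq_empty] at hemp
    have : ∑ i ∈ t, w i = 0 := by
      apply Finset.sum_eq_zero
      intro i hi
      by_contra hne0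
      have : 0 < w i := lt_of_le_of_ne (hw0 i hi) (Ne.symm hne0)
      have : i ∈ t' := Finset.mem_filter.mpr ⟨hi, this⟩
      rw [hemp] at this
      exact absurd this (Finset.notMem_empty i)
    rw [hw1] at this
    norm_num at this
  have hzs' : ∀ i : ι, ∃ q, i ∈ t → (q ∈ P ∧ cR q = z i) := by
    intro i
    by_cases hi : i ∈ t
    · obtain ⟨q, hq, hcq⟩ := hzs i hi
      exact ⟨q, fun _ => ⟨hq, hcq⟩⟩
    · exact ⟨0, fun h => absurd h hi⟩
  choose p hp using hzs'
  set S : Finset (Fin n → ℤ) := t'.image p with hSdef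
  set lam : (Fin n → ℤ) → ℝ := fun q => ∑ i ∈ t'.filter (fun i => p i = q), w i with hlamdef
  have ht'sub : ∀ i ∈ t', i ∈ t := fun i hi => Finset.mem_of_mem_filter _ hi
  have hSP : ∀ q ∈ S, q ∈ P := by
    intro q hq
    obtain ⟨i, hi, rfl⟩ := Finset.mem_image.mp hq
    exact (hp i (ht'sub i hi)).1
  have hSne : S.Nonempty := ht'ne.image p
  have hlampos : ∀ q ∈ S, 0 < lam q := by
    intro q hq
    obtain ⟨i0, hi0, rfl⟩ := Finset.mem_image.mp hq
    apply Finset.sum_pos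
    · intro i hi
      have hit' := (Finset.mem_filter.mp hi).1
      exact (Finset.mem_filter.mp hit').2
    · exact ⟨i0, Finset.mem_filter.mpr ⟨hi0, rfl⟩⟩
  have hlamsum : ∑ q ∈ S, lam q • cR q = 0 := by
    have := Finset.sum_fiberwise_of_maps_to (g := p) (t := S)
      (fun i hi => Finset.mem_image_of_mem p hi) (fun i => w i • z i)
    rw [← ht'sum, ← this]
    refine Finset.sum_congr rfl fun q hq => ?_
    rw [hlamdef]
    simp only []
    rw [Finset.sum_smul]
    refine Finset.sum_congr rfl fun i hi => ?_
    obtain ⟨hit', hpi⟩ := Finset.mem_filter.mp hi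
    rw [← hpi, (hp i (ht'sub i hit')).2]
  obtain ⟨T, hTsub, hTne, k, hk1, hk2⟩ := ratRelation S lam hlampos hlamsum hSne
  have : (0 : Fin n → ℤ) ∈ P := by
    rw [← hk2]
    exact sum_smul_mem hadd T hTne (fun q hq => hSP q (hTsub hq)) k hk1
  exact h0 this

lemma exists_support (hn : 0 < n) (P : Set (Fin n → ℤ))
    (hadd : ∀ v w, v ∈ P → w ∈ P → v + w ∈ P) (h0 : (0 : Fin n → ℤ) ∉ P)
    (htot : ∀ v : Fin n → ℤ, v ≠ 0 → v ∈ P ∨ -v ∈ P) :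
    ∃ w : Fin n → ℝ, w ≠ 0 ∧ ∀ p ∈ P, 0 ≤ dotZ w p := by
  classical
  have hPne : P.Nonempty := by
    set e0 : Fin n → ℤ := Pi.single ⟨0, hn⟩ 1 with he0
    have hne : e0 ≠ 0 := by
      intro h
      have := congrFun h ⟨0, hn⟩
      rw [he0] at this
      simp at this
    rcases htot e0 hne with h | h
    · exact ⟨e0, h⟩
    · exact ⟨-e0, h⟩
  by_cases htop : Submodule.span ℝ (cR '' P) = ⊤
  · -- full-dimensional case: separate `0` from the convex hull
    set C := convexHull ℝ (cR '' P) with hC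
    have hC0 : (0 : Fin n → ℝ) ∉ C := zero_notin_hull hadd h0
    have hconv : Convex ℝ C := convex_convexHull ℝ _
    have hvs : vectorSpan ℝ (cR '' P) = ⊤ := by
      rw [eq_top_iff, ← htop, Submodule.span_le]
      intro x hx
      obtain ⟨q, hq, rfl⟩ := hx
      have h2q : cR (q + q) ∈ cR '' P := ⟨q + q, hadd q q hq hq, rfl⟩
      have hq' : cR q ∈ cR '' P := ⟨q, hq, rfl⟩
      have : cR (q + q) - cR q = cR q := by rw [cR_add]; abel
      rw [← this]
      exact Submodule.subset_span (Set.vsub_mem_vsub h2q hq')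
    have haff : affineSpan ℝ (cR '' P) = ⊤ := by
      rw [AffineSubspace.affineSpan_eq_top_iff_vectorSpan_eq_top_of_nonempty ℝ (Fin n → ℝ) (Fin n → ℝ)
        (hPne.image cR)]
      exact hvs
    have hint : (interior C).Nonempty := by
      rw [hconv.interior_nonempty_iff_affineSpan_eq_top, hC, affineSpan_convexHull]
      exact haff
    obtain ⟨a0, ha0⟩ := hint
    obtain ⟨f, hf⟩ := geometric_hahn_banach_open_point (hconv.interior) isOpen_interior
      (fun h => hC0 (interior_subset h))
    have hf0 : f (0 : Fin n → ℝ) = 0 := map_zero f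
    have hfa0 : f a0 < 0 := by
      have := hf a0 ha0
      rwa [hf0] at this
    have hfC : ∀ x ∈ C, f x ≤ 0 := by
      intro x hx
      by_contra hfx
      push_neg at hfx
      set tt := f x / (f x - f a0) with htt
      have hd : 0 < f x - f a0 := by linarith
      have htt0 : 0 < tt := div_pos hfx hd
      have htt1 : tt + (1 - tt) = 1 := by ring
      have h1tt : 0 ≤ 1 - tt := by
        have hle : tt ≤ 1 := by
          rw [htt, div_le_one hd]
          linarith
        linarith
      have hcombo := hconv.combo_interior_self_mem_interior ha0 hx htt0 h1tt htt1
      have := hf _ hcombo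
      rw [hf0, map_add, map_smul, map_smul] at this
      simp only [smul_eq_mul] at this
      rw [htt] at this
      have hne : f x - f a0 ≠ 0 := ne_of_gt hd
      field_simp at this
      rw [show f x * (f a0 + (f x - f a0 - f x)) = 0 by ring] at this
      linarith
    refine ⟨fun i => -(f (Pi.single i 1)), ?_, ?_⟩
    · intro hw
      have hrepr : ∀ y : Fin n → ℝ, f y = ∑ i, y i * f (Pi.single i 1) :=
        fun y => applyRepr (f : (Fin n → ℝ) →ₗ[ℝ] ℝ) y
      have : f a0 = 0 := by
        rw [hrepr a0]
        apply Finset.sum_eq_zero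
        intro i _
        have := congrFun hw i
        simp only [Pi.zero_apply, neg_eq_zero] at this
        rw [this, mul_zero]
      linarith
    · intro q hq
      have hqC : cR q ∈ C := subset_convexHull ℝ _ ⟨q, hq, rfl⟩
      have hle := hfC _ hqC
      have hrepr : f (cR q) = ∑ i, (cR q) i * f (Pi.single i 1) :=
        applyRepr (f : (Fin n → ℝ) →ₗ[ℝ] ℝ) _
      have : dotZ (fun i => -(f (Pi.single i 1))) q = -(f (cR q)) := by
        rw [hrepr, dotZ, ← Finset.sum_neg_distrib]
        refine Finset.sum_congr rfl fun i _ => ?_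
        simp [cR]
        ring
      rw [this]
      linarith
  · -- the span is proper: take a functional vanishing on it
    obtain ⟨x, hx⟩ : ∃ x : Fin n → ℝ, x ∉ Submodule.span ℝ (cR '' P) := by
      by_contra hall
      push_neg at hall
      exact htop (eq_top_iff.mpr fun y _ => hall y)
    obtain ⟨f, hfx, hfbot⟩ := Submodule.exists_dual_map_eq_bot_of_notMem hx inferInstance
    refine ⟨fun i => f (Pi.single i 1), ?_, ?_⟩
    · intro hw
      apply hfx
      rw [applyRepr f x]
      apply Finset.sum_eq_zero
      intro i _
      have := congrFun hw i
      simp only [Pi.zero_apply] at this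
      rw [this, mul_zero]
    · intro q hq
      have hmem : f (cR q) ∈ Submodule.map f (Submodule.span ℝ (cR '' P)) :=
        Submodule.mem_map_of_mem (Submodule.subset_span ⟨q, hq, rfl⟩)
      rw [hfbot] at hmem
      have hf0 : f (cR q) = 0 := by simpa using hmem
      have : dotZ (fun i => f (Pi.single i 1)) q = f (cR q) := by
        rw [applyRepr f (cR q), dotZ]
        refine Finset.sum_congr rfl fun i _ => ?_
        simp [cR]
        ring
      rw [this, hf0]

lemma cR_sum {α : Type*} (t : Finset α) (m : α → ℤ) (v : α → (Fin n → ℤ)) :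
    cR (∑ i ∈ t, m i • v i) = ∑ i ∈ t, (m i : ℝ) • cR (v i) := by
  funext j
  simp only [cR, Finset.sum_apply, Pi.smul_apply, smul_eq_mul]
  push_cast
  rfl

lemma dotZ_neg (u : Fin n → ℝ) (v : Fin n → ℤ) : dotZ u (-v) = -dotZ u v := by
  simp only [dotZ]
  rw [← Finset.sum_neg_distrib]
  refine Finset.sum_congr rfl fun i _ => ?_
  simp only [Pi.neg_apply, Int.cast_neg]
  ring

lemma dotZ_zero (u : Fin n → ℝ) : dotZ u 0 = 0 := by
  simp [dotZ]

lemma dotZ_functional (G : (Fin n → ℝ) →ₗ[ℝ] ℝ) (v : Fin n → ℤ) :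
    dotZ (fun i => G (Pi.single i 1)) v = G (cR v) := by
  rw [applyRepr G (cR v)]
  simp only [dotZ]
  refine Finset.sum_congr rfl fun i _ => ?_
  simp only [cR]
  ring

/-- `v ↦ dotZ u v` as a `ℤ`-linear map. -/
def dotZL (u : Fin n → ℝ) : (Fin n → ℤ) →ₗ[ℤ] ℝ where
  toFun v := dotZ u v
  map_add' a b := by
    simp only [dotZ]
    rw [← Finset.sum_add_distrib]
    refine Finset.sum_congr rfl fun i _ => ?_
    simp only [Pi.add_apply, Int.cast_add]
    ring
  map_smul' m a := by
    simp only [RingHom.id_apply, zsmul_eq_mul, dotZ]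
    rw [Finset.mul_sum]
    refine Finset.sum_congr rfl fun i _ => ?_
    simp only [Pi.mul_apply, Pi.intCast_apply]
    push_cast
    ring

/-- lexicographic positivity with respect to a sequence of weight vectors -/
def LexPos {n : ℕ} (W : Fin n → (Fin n → ℝ)) (v : Fin n → ℤ) : Prop :=
  ∃ j : Fin n, (∀ j' < j, dotZ (W j') v = 0) ∧ 0 < dotZ (W j) v

lemma lexpos_asymm (W : Fin n → (Fin n → ℝ)) (v : Fin n → ℤ)
    (h1 : LexPos W v) (h2 : LexPos W (-v)) : False := by
  obtain ⟨j1, ht1, hs1⟩ := h1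
  obtain ⟨j2, ht2, hs2⟩ := h2
  rcases lt_trichotomy j1 j2 with h | h | h
  · have := ht2 j1 h
    rw [dotZ_neg, neg_eq_zero] at this
    rw [this] at hs1
    exact lt_irrefl 0 hs1
  · subst h
    rw [dotZ_neg] at hs2
    linarith
  · have := ht1 j2 h
    rw [dotZ_neg] at hs2
    rw [this] at hs2
    simp at hs2

/-- The core theorem: the positive cone of a total translation-invariant strict order on
`ℤ^n` is given by lexicographic positivity for a sequence of `n` real weight vectors. -/
theorem core : ∀ (n : ℕ) (P : Set (Fin n → ℤ)),
    (∀ v w, v ∈ P → w ∈ P → v + w ∈ P) → (0 : Fin n → ℤ) ∉ P →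
    (∀ v : Fin n → ℤ, v ≠ 0 → v ∈ P ∨ -v ∈ P) →
    ∃ W : Fin n → (Fin n → ℝ), ∀ v, v ∈ P ↔ LexPos W v := by
  intro n
  induction n using Nat.strong_induction_on with
  | _ n IH =>
  intro P hadd h0 htot
  rcases Nat.eq_zero_or_pos n with hn0 | hn
  · subst hn0
    refine ⟨fun _ => 0, fun v => ?_⟩
    have hv : v = 0 := Subsingleton.elim v 0
    constructor
    · intro hvP
      rw [hv] at hvP
      exact absurd hvP h0
    · rintro ⟨j, -, -⟩
      exact j.elim0
  · obtain ⟨w, hwne, hwP⟩ := exists_support hn P hadd h0 htot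
    set L : Submodule ℤ (Fin n → ℤ) := LinearMap.ker (dotZL w) with hLdef
    obtain ⟨r, b⟩ := Submodule.basisOfPid (Pi.basisFun ℤ (Fin n)) L
    set b' : Fin r → (Fin n → ℤ) := fun i => ((b i : L) : Fin n → ℤ) with hb'def
    have hb'li : LinearIndependent ℤ b' :=
      b.linearIndependent.map' L.subtype L.ker_subtype
    have hliR : LinearIndependent ℝ (fun i => cR (b' i)) := linearIndependent_cR hb'li
    set F : (Fin n → ℝ) →ₗ[ℝ] ℝ := dotL w with hFdef
    have hdotF : ∀ v : Fin n → ℤ, dotZ w v = F (cR v) := by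
      intro v
      simp only [hFdef, dotL, dotZ, LinearMap.coe_mk, AddHom.coe_mk]
      refine Finset.sum_congr rfl fun i _ => ?_
      simp only [cR]
      ring
    have hL' : ∀ v : Fin n → ℤ, v ∈ L ↔ dotZ w v = 0 := by
      intro v
      rw [hLdef, LinearMap.mem_ker]
      rfl
    -- the kernel of `F` has rank `n - 1`
    have hFsurj : LinearMap.range F = ⊤ := by
      rw [LinearMap.range_eq_top]
      intro y
      obtain ⟨i0, hi0⟩ := Function.ne_iff.mp hwne
      refine ⟨y • (Pi.single i0 (1 / w i0) : Fin n → ℝ), ?_⟩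
      rw [map_smul]
      have : F (Pi.single i0 (1 / w i0)) = 1 := by
        simp only [hFdef, dotL, LinearMap.coe_mk, AddHom.coe_mk]
        rw [Finset.sum_eq_single i0]
        · rw [Pi.single_eq_same]
          have hi0' : w i0 ≠ 0 := hi0
          field_simp
        · intro i _ hne
          rw [Pi.single_eq_of_ne hne, zero_mul]
        · intro h
          exact absurd (Finset.mem_univ i0) h
      rw [this, smul_eq_mul, mul_one]
    have hkerrank : Module.finrank ℝ (LinearMap.ker F) = n - 1 := by
      have hrn := F.finrank_range_add_finrank_ker
      rw [hFsurj] at hrn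
      rw [finrank_top, Module.finrank_self] at hrn
      have hpi : Module.finrank ℝ (Fin n → ℝ) = n := by
        simp [Module.finrank_pi]
      rw [hpi] at hrn
      omega
    have hrlt : r < n := by
      have hmemK : ∀ i, cR (b' i) ∈ LinearMap.ker F := by
        intro i
        rw [LinearMap.mem_ker, ← hdotF]
        rw [← hL']
        exact (b i).2
      set g : Fin r → LinearMap.ker F := fun i => ⟨cR (b' i), hmemK i⟩ with hgdef
      have hgli : LinearIndependent ℝ g := by
        apply LinearIndependent.of_comp (LinearMap.ker F).subtype
        exact hliR
      have hcard := hgli.fintype_card_le_finrank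
      rw [hkerrank, Fintype.card_fin] at hcard
      omega
    -- the restricted order on the tie lattice
    set ψ := b.equivFun.symm with hψdef
    set P' : Set (Fin r → ℤ) := {u | ((ψ u : L) : Fin n → ℤ) ∈ P} with hP'def
    have hcoeadd : ∀ x y : L, ((x + y : L) : Fin n → ℤ) = (x : Fin n → ℤ) + (y : Fin n → ℤ) :=
      fun x y => rfl
    have hP'add : ∀ u v, u ∈ P' → v ∈ P' → u + v ∈ P' := by
      intro u v hu hv
      show ((ψ (u + v) : L) : Fin n → ℤ) ∈ P
      rw [map_add]
      exact hadd _ _ hu hv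
    have hP'0 : (0 : Fin r → ℤ) ∉ P' := by
      intro hu
      have : ((ψ 0 : L) : Fin n → ℤ) ∈ P := hu
      rw [map_zero] at this
      exact h0 this
    have hP'tot : ∀ u : Fin r → ℤ, u ≠ 0 → u ∈ P' ∨ -u ∈ P' := by
      intro u hu
      have hne : ((ψ u : L) : Fin n → ℤ) ≠ 0 := by
        intro h
        apply hu
        have : (ψ u : L) = 0 := Subtype.ext h
        have := congrArg b.equivFun (this)
        rw [hψdef, LinearEquiv.apply_symm_apply, map_zero] at this
        exact this
      rcases htot _ hne with h | h
      · exact Or.inl h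
      · right
        show ((ψ (-u) : L) : Fin n → ℤ) ∈ P
        rw [map_neg]
        exact h
    obtain ⟨W', hW'⟩ := IH r hrlt P' hP'add hP'0 hP'tot
    -- dual functionals for the basis of the tie lattice
    set V := Submodule.span ℝ (Set.range (fun i => cR (b' i))) with hVdef
    set BS : Module.Basis (Fin r) ℝ V := Module.Basis.span hliR with hBSdef
    have hext : ∀ k : Fin r, ∃ g : (Fin n → ℝ) →ₗ[ℝ] ℝ,
        g.comp V.subtype = BS.coord k := fun k => LinearMap.exists_extend _
    choose g hg using hext
    have hgb : ∀ k i, g k (cR (b' i)) = if i = k then 1 else 0 := by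
      intro k i
      have hmem : cR (b' i) ∈ V := Submodule.subset_span (Set.mem_range_self i)
      have h1 : (⟨cR (b' i), hmem⟩ : V) = BS i :=
        Subtype.ext (Module.Basis.coe_span_apply hliR i).symm
      have h2 : g k (cR (b' i)) = (g k).comp V.subtype ⟨cR (b' i), hmem⟩ := rfl
      rw [h2, hg k, h1, Module.Basis.coord_apply, Module.Basis.repr_self]
      rw [Finsupp.single_apply]
    -- coordinates of a tie vector
    have hgv : ∀ (v : Fin n → ℤ) (hv : v ∈ L) (k : Fin r),
        g k (cR v) = ((b.equivFun ⟨v, hv⟩) k : ℝ) := by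
      intro v hv k
      have hvrepr : v = ∑ i, (b.equivFun ⟨v, hv⟩ i) • b' i := by
        have hsum := b.sum_equivFun ⟨v, hv⟩
        calc v = ((⟨v, hv⟩ : L) : Fin n → ℤ) := rfl
        _ = ((∑ i, (b.equivFun ⟨v, hv⟩ i) • b i : L) : Fin n → ℤ) := by rw [hsum]
        _ = ∑ i, (b.equivFun ⟨v, hv⟩ i) • b' i := by
            show L.subtype _ = _
            rw [map_sum]
            refine Finset.sum_congr rfl fun i _ => ?_
            rw [map_smul]
            rfl
      conv_lhs => rw [hvrepr]
      rw [cR_sum, map_sum]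
      have hterm : ∀ i ∈ Finset.univ, g k ((((b.equivFun ⟨v, hv⟩ i) : ℝ)) • cR (b' i))
          = if i = k then ((b.equivFun ⟨v, hv⟩ i) : ℝ) else 0 := by
        intro i _
        rw [map_smul, smul_eq_mul, hgb, mul_ite, mul_one, mul_zero]
      rw [Finset.sum_congr rfl hterm]
      rw [Finset.sum_ite_eq' Finset.univ k (fun i => ((b.equivFun ⟨v, hv⟩ i) : ℝ))]
      simp
    -- assemble the weight vectors
    set GG : Fin r → ((Fin n → ℝ) →ₗ[ℝ] ℝ) := fun j => ∑ k, W' j k • g k with hGGdef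
    set W : Fin n → (Fin n → ℝ) := fun j =>
      if h0j : (j : ℕ) = 0 then w
      else if hrj : (j : ℕ) - 1 < r then (fun i => GG ⟨(j : ℕ) - 1, hrj⟩ (Pi.single i 1))
      else 0 with hWdef
    have hW0 : W ⟨0, hn⟩ = w := by
      simp [hWdef]
    have hWsucc : ∀ (jj : Fin r), W ⟨jj + 1, by omega⟩
        = fun i => GG jj (Pi.single i 1) := by
      intro jj
      simp only [hWdef]
      rw [dif_neg (by simp), dif_pos (by simp [jj.isLt])]
      have : (⟨(jj : ℕ) + 1 - 1, by simpa using jj.isLt⟩ : Fin r) = jj := by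
        apply Fin.ext
        simp
      rw [this]
    -- value of the lifted functionals on tie vectors
    have hGGval : ∀ (jj : Fin r) (v : Fin n → ℤ) (hv : v ∈ L),
        dotZ (W ⟨jj + 1, by omega⟩) v = dotZ (W' jj) (b.equivFun ⟨v, hv⟩) := by
      intro jj v hv
      rw [hWsucc jj, dotZ_functional (GG jj) v]
      rw [hGGdef]
      simp only [LinearMap.coe_sum, Finset.sum_apply, LinearMap.smul_apply, smul_eq_mul]
      rw [dotZ]
      refine Finset.sum_congr rfl fun k _ => ?_
      rw [hgv v hv k]
    -- forward implication
    have hfwd : ∀ v, v ∈ P → LexPos W v := by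
      intro v hv
      rcases eq_or_lt_of_le (hwP v hv) with heq | hlt
      · -- tie with the first vector
        have hvL : v ∈ L := (hL' v).mpr heq.symm
        set u := b.equivFun ⟨v, hvL⟩ with hudef
        have hvP' : u ∈ P' := by
          show ((ψ u : L) : Fin n → ℤ) ∈ P
          rw [hudef, hψdef, LinearEquiv.symm_apply_apply]
          exact hv
        obtain ⟨j', htie, hstrict⟩ := (hW' u).mp hvP'
        refine ⟨⟨j' + 1, by omega⟩, ?_, ?_⟩
        · intro j'' hlt'
          have hlt'' : (j'' : ℕ) < (j' : ℕ) + 1 := hlt'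
          rcases Nat.eq_zero_or_pos (j'' : ℕ) with h0' | hpos'
          · have : j'' = ⟨0, hn⟩ := Fin.ext h0'
            rw [this, hW0]
            exact heq.symm
          · set kk : Fin r := ⟨(j'' : ℕ) - 1, by omega⟩ with hkkdef
            have : j'' = ⟨(kk : ℕ) + 1, by omega⟩ := by
              apply Fin.ext
              simp [hkkdef]
              omega
            rw [this, hGGval kk v hvL]
            apply htie
            show ((kk : ℕ) : ℕ) < (j' : ℕ)
            simp [hkkdef]
            omega
        · rw [hGGval j' v hvL]
          exact hstrict
      · exact ⟨⟨0, hn⟩, fun j'' hj'' => absurd hj'' (by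
          intro h
          have : (j'' : ℕ) < 0 := h
          omega), by rw [hW0]; exact hlt⟩
    -- conclusion
    refine ⟨W, fun v => ⟨hfwd v, ?_⟩⟩
    intro hlp
    by_cases hv0 : v = 0
    · exfalso
      obtain ⟨j, -, hs⟩ := hlp
      rw [hv0, dotZ_zero] at hs
      exact lt_irrefl 0 hs
    · rcases htot v hv0 with h | h
      · exact h
      · exact absurd (lexpos_asymm W v hlp (hfwd _ h)) not_false

end RobbianoAux

/-- Robbiano-type representation of local monomial orders: every local monomial order `≺` on
`ℕ^n` is defined lexicographically by a sequence of `n` weight vectors, the first of which has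
nonpositive components; in particular `≺` refines the partial order given by a vector
`w ∈ ℝ_{≤0}^n`. -/
theorem robbiano_local_order {n : ℕ} (hn : 0 < n)
    (prec : (Fin n → ℕ) → (Fin n → ℕ) → Prop)
    (htotal : ∀ a b, prec a b ∨ a = b ∨ prec b a)
    (hirr : ∀ a, ¬ prec a a)
    (htrans : ∀ a b c, prec a b → prec b c → prec a c)
    (hadd : ∀ a b c, prec a b → prec (c + a) (c + b))
    (hloc : ∀ a, a ≠ 0 → prec a 0) :
    ∃ W : Fin n → (Fin n → ℝ),
      (∀ i, W ⟨0, hn⟩ i ≤ 0) ∧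
      (∀ a b, prec a b ↔ ∃ j : Fin n,
        (∀ j' < j, udotN (W j') a = udotN (W j') b) ∧ udotN (W j) a < udotN (W j) b) ∧
      (∀ a b, prec a b → udotN (W ⟨0, hn⟩) a ≤ udotN (W ⟨0, hn⟩) b) := by
  classical
  set D : (Fin n → ℕ) → (Fin n → ℕ) → (Fin n → ℤ) :=
    fun a b => (fun i => (b i : ℤ) - (a i : ℤ)) with hD
  set P : Set (Fin n → ℤ) := {v | ∃ a b, v = D a b ∧ prec a b} with hP
  have hcancel : ∀ a b c, prec (c + a) (c + b) → prec a b := by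
    intro a b c h
    rcases htotal a b with h1 | h1 | h1
    · exact h1
    · subst h1
      exact absurd h (hirr _)
    · exact absurd (htrans _ _ _ h (hadd b a c h1)) (hirr _)
  have hkey : ∀ a b, prec a b ↔ D a b ∈ P := by
    intro a b
    constructor
    · intro h
      exact ⟨a, b, rfl, h⟩
    · rintro ⟨c, d, heq, hcd⟩
      have hnat : d + a = b + c := by
        funext i
        have hz := congrFun heq i
        simp only [hD] at hz
        have : (d i + a i : ℤ) = (b i + c i : ℤ) := by push_cast at hz ⊢; linarith
        exact_mod_cast this
      have h1 := hadd c d a hcd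
      have h2 : a + d = c + b := by
        rw [add_comm a d, hnat, add_comm b c]
      rw [h2] at h1
      rw [show a + c = c + a from add_comm a c] at h1
      exact hcancel a b c h1
  have hPadd : ∀ v w, v ∈ P → w ∈ P → v + w ∈ P := by
    rintro v w ⟨a, b, rfl, hab⟩ ⟨c, d, rfl, hcd⟩
    refine ⟨a + c, b + d, ?_, ?_⟩
    · funext i
      simp only [hD, Pi.add_apply]
      push_cast
      ring
    · have h1 := hadd a b c hab
      have h2 := hadd c d b hcd
      rw [show b + c = c + b from add_comm b c] at h2
      have h3 := htrans _ _ _ h1 h2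
      rw [show c + a = a + c from add_comm c a] at h3
      exact h3
  have hP0 : (0 : Fin n → ℤ) ∉ P := by
    rintro ⟨a, b, hab, hprec⟩
    have : a = b := by
      funext i
      have hz : (0 : ℤ) = (b i : ℤ) - (a i : ℤ) := congrFun hab i
      omega
    subst this
    exact hirr _ hprec
  have hPtot : ∀ v : Fin n → ℤ, v ≠ 0 → v ∈ P ∨ -v ∈ P := by
    intro v hv
    set a : Fin n → ℕ := fun i => (-(v i)).toNat with ha
    set bb : Fin n → ℕ := fun i => (v i).toNat with hbb
    have hDab : D a bb = v := by
      funext i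
      simp only [hD, ha, hbb]
      omega
    have hDba : D bb a = -v := by
      funext i
      simp only [hD, ha, hbb, Pi.neg_apply]
      omega
    rcases htotal a bb with h | h | h
    · left
      rw [← hDab]
      exact ⟨a, bb, rfl, h⟩
    · exfalso
      apply hv
      funext i
      have hz := congrFun h i
      simp only [ha, hbb] at hz
      show v i = 0
      omega
    · right
      rw [← hDba]
      exact ⟨bb, a, rfl, h⟩
  obtain ⟨W, hW⟩ := RobbianoAux.core n P hPadd hP0 hPtot
  have hdot : ∀ (u : Fin n → ℝ) (a b : Fin n → ℕ),
      RobbianoAux.dotZ u (D a b) = udotN u b - udotN u a := by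
    intro u a b
    simp only [RobbianoAux.dotZ, hD, udotN]
    rw [← Finset.sum_sub_distrib]
    refine Finset.sum_congr rfl fun i _ => ?_
    push_cast
    ring
  have hiff : ∀ a b, prec a b ↔ ∃ j : Fin n,
      (∀ j' < j, udotN (W j') a = udotN (W j') b) ∧ udotN (W j) a < udotN (W j) b := by
    intro a b
    rw [hkey a b, hW (D a b)]
    unfold RobbianoAux.LexPos
    constructor
    · rintro ⟨j, ht, hs⟩
      refine ⟨j, fun j' hj' => ?_, ?_⟩
      · have hz := ht j' hj'
        rw [hdot] at hz
        linarith
      · have hz := hs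
        rw [hdot] at hz
        linarith
    · rintro ⟨j, ht, hs⟩
      refine ⟨j, fun j' hj' => ?_, ?_⟩
      · rw [hdot]
        have hz := ht j' hj'
        linarith
      · rw [hdot]
        linarith [hs]
  have hsupp : ∀ a b, prec a b → udotN (W ⟨0, hn⟩) a ≤ udotN (W ⟨0, hn⟩) b := by
    intro a b hab
    obtain ⟨j, ht, hs⟩ := (hiff a b).mp hab
    rcases Nat.eq_zero_or_pos (j : ℕ) with h0 | hpos
    · have : j = ⟨0, hn⟩ := Fin.ext h0
      rw [this] at hs
      linarith
    · have hlt : (⟨0, hn⟩ : Fin n) < j := hpos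
      have := ht _ hlt
      linarith
  refine ⟨W, ?_, hiff, hsupp⟩
  intro i
  set e : Fin n → ℕ := fun k => if k = i then 1 else 0 with he
  have hene : e ≠ 0 := by
    intro h
    have := congrFun h i
    simp [he] at this
  have hprec := hloc e hene
  have hle := hsupp e 0 hprec
  have h1 : udotN (W ⟨0, hn⟩) e = W ⟨0, hn⟩ i := by
    simp only [udotN, he]
    rw [Finset.sum_eq_single i]
    · simp
    · intro k _ hk
      simp [hk]
    · intro h
      exact absurd (Finset.mem_univ i) h
  have h2 : udotN (W ⟨0, hn⟩) (0 : Fin n → ℕ) = 0 := by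
    simp [udotN]
  rw [h1, h2] at hle
  exact hle
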